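/- For every γ̄ > 0 and every g_l ≥ 0, the integral ∫_{g_l}^∞ log₂(1 + γ̄ g) e^{−g} dg equals e^{−g_l} log₂(1 + γ̄ g_l) + (e^{1/γ̄} / ln 2) · E₁(1/γ̄ + g_l). -/

import Mathlib

open MeasureTheory Real

section Helpers
open Set Filter Topology

lemma expInt_integrableOn {z : ℝ} (hz : 0 < z) :
    IntegrableOn (fun t : ℝ => Real.exp (-t) / t) (Set.Ioi z) := by
  have hi : IntegrableOn (fun t : ℝ => Real.exp (-t) / z) (Set.Ioi z) := by
    have := (exp_neg_integrableOn_Ioi z (by norm_num : (0:ℝ) < 1)).div_const z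
    simp at this; exact this
  refine hi.mono' ?_ ?_
  · exact ((Real.measurable_exp.comp measurable_neg).div measurable_id).aestronglyMeasurable
  · filter_upwards [ae_restrict_mem measurableSet_Ioi] with t ht
    have htz : z ≤ t := le_of_lt ht
    have ht0 : 0 < t := lt_of_lt_of_le hz htz
    rw [Real.norm_eq_abs, abs_of_nonneg (by positivity)]
    exact div_le_div_of_nonneg_left (Real.exp_pos _).le hz htz

lemma expInt_def (z : ℝ) : (∫ t in Set.Ioi z, Real.exp (-t) / t) = (∫ t in Set.Ioi z, Real.exp (-t) / t) := rfl

lemma expInt_split {a b : ℝ} (ha : 0 < a) (hab : a ≤ b) :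
    (∫ t in Set.Ioi a, Real.exp (-t) / t)
      = (∫ t in a..b, Real.exp (-t) / t) + ∫ t in Set.Ioi b, Real.exp (-t) / t := by
  rw [intervalIntegral.integral_of_le hab,
    ← setIntegral_union (Set.Ioc_disjoint_Ioi le_rfl) measurableSet_Ioi
      ((expInt_integrableOn ha).mono_set Set.Ioc_subset_Ioi_self)
      (expInt_integrableOn (lt_of_lt_of_le ha hab)),
    Set.Ioc_union_Ioi_eq_Ioi hab]

lemma expInt_hasDerivAt {z : ℝ} (hz : 0 < z) :
    HasDerivAt (fun y => ∫ t in Set.Ioi y, Real.exp (-t) / t) (-(Real.exp (-z) / z)) z := by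
  set c := z / 2 with hc
  have hc0 : 0 < c := by positivity
  have hcz : c < z := by simp [hc]; linarith
  have hii : IntervalIntegrable (fun t => Real.exp (-t) / t) volume c z :=
    (intervalIntegrable_iff_integrableOn_Ioc_of_le hcz.le).2
      ((expInt_integrableOn hc0).mono_set Set.Ioc_subset_Ioi_self)
  have hca : ContinuousAt (fun t => Real.exp (-t) / t) z :=
    ((Real.continuous_exp.comp continuous_neg).continuousAt).div continuousAt_id hz.ne'
  have hD : HasDerivAt (fun y => (∫ t in Set.Ioi c, Real.exp (-t) / t)
      - ∫ t in c..y, Real.exp (-t) / t) (-(Real.exp (-z) / z)) z :=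
    (intervalIntegral.integral_hasDerivAt_right hii
      (((Real.measurable_exp.comp measurable_neg).div measurable_id).stronglyMeasurable.stronglyMeasurableAtFilter) hca).const_sub _
  refine hD.congr_of_eventuallyEq ?_
  filter_upwards [eventually_gt_nhds hcz] with y hy
  have := expInt_split hc0 hy.le
  linarith

lemma expInt_tendsto_zero :
    Tendsto (fun z => ∫ t in Set.Ioi z, Real.exp (-t) / t) atTop (𝓝 0) := by
  have hupper : ∀ᶠ z in atTop, (∫ t in Set.Ioi z, Real.exp (-t) / t) ≤ Real.exp (-z) := by
    filter_upwards [eventually_ge_atTop (1:ℝ)] with z hz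
    have h1 : (∫ t in Set.Ioi z, Real.exp (-t) / t) ≤ ∫ t in Set.Ioi z, Real.exp (-t) := by
      refine setIntegral_mono_on (expInt_integrableOn (by linarith)) ?_ measurableSet_Ioi ?_
      · simpa using exp_neg_integrableOn_Ioi z (by norm_num : (0:ℝ) < 1)
      · intro t ht
        have ht1 : 1 ≤ t := le_of_lt (lt_of_le_of_lt hz ht)
        calc Real.exp (-t) / t ≤ Real.exp (-t) / 1 :=
              div_le_div_of_nonneg_left (Real.exp_pos _).le one_pos ht1
          _ = Real.exp (-t) := by ring
    simpa only [integral_exp_neg_Ioi] using h1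
  have hlower : ∀ᶠ z in atTop, 0 ≤ ∫ t in Set.Ioi z, Real.exp (-t) / t := by
    filter_upwards [eventually_ge_atTop (1:ℝ)] with z hz
    refine setIntegral_nonneg measurableSet_Ioi fun t ht => ?_
    have : 0 < t := lt_of_lt_of_le one_pos (le_of_lt (lt_of_le_of_lt hz ht))
    positivity
  exact tendsto_of_tendsto_of_tendsto_of_le_of_le' tendsto_const_nhds
    (Real.tendsto_exp_neg_atTop_nhds_zero) hlower hupper

lemma logb_exp_tendsto_zero {γ : ℝ} (hγ : 0 < γ) :
    Tendsto (fun g => -(Real.exp (-g) * Real.logb 2 (1 + γ * g))) atTop (𝓝 0) := by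
  rw [← neg_zero]
  refine Tendsto.neg ?_
  have hup : ∀ᶠ g in atTop, Real.exp (-g) * Real.logb 2 (1 + γ * g)
      ≤ γ / Real.log 2 * (g ^ 1 * Real.exp (-g)) := by
    filter_upwards [eventually_ge_atTop (0:ℝ)] with g hg
    have h1 : (0:ℝ) < 1 + γ * g := by nlinarith
    have hlog : Real.log (1 + γ * g) ≤ γ * g := by
      have := Real.log_le_sub_one_of_pos h1
      linarith
    have hl2 : (0:ℝ) < Real.log 2 := Real.log_pos one_lt_two
    rw [Real.logb,
      show Real.exp (-g) * (Real.log (1 + γ * g) / Real.log 2)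
        = (Real.exp (-g) * Real.log (1 + γ * g)) / Real.log 2 from by ring,
      show γ / Real.log 2 * (g ^ 1 * Real.exp (-g))
        = (γ * g * Real.exp (-g)) / Real.log 2 from by ring]
    refine (div_le_div_iff_of_pos_right hl2).2 ?_
    nlinarith [mul_le_mul_of_nonneg_left hlog (Real.exp_pos (-g)).le]
  have hlo : ∀ᶠ g in atTop, 0 ≤ Real.exp (-g) * Real.logb 2 (1 + γ * g) := by
    filter_upwards [eventually_ge_atTop (0:ℝ)] with g hg
    have h1 : (1:ℝ) ≤ 1 + γ * g := by nlinarith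
    exact mul_nonneg (Real.exp_pos _).le (Real.logb_nonneg one_lt_two h1)
  have hz : Tendsto (fun g : ℝ => γ / Real.log 2 * (g ^ 1 * Real.exp (-g))) atTop (𝓝 0) := by
    have := (Real.tendsto_pow_mul_exp_neg_atTop_nhds_zero 1).const_mul (γ / Real.log 2)
    simpa using this
  exact tendsto_of_tendsto_of_tendsto_of_le_of_le' tendsto_const_nhds hz hlo hup

private theorem phat_pi_aux (γ : ℝ) (hγ : 0 < γ) (gl : ℝ) (hgl : 0 ≤ gl) :
    ∫ g in Set.Ioi gl, Real.logb 2 (1 + γ * g) * Real.exp (-g)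
      = Real.exp (-gl) * Real.logb 2 (1 + γ * gl)
        + Real.exp (1 / γ) / Real.log 2 * (∫ t in Set.Ioi (1 / γ + gl), Real.exp (-t) / t) := by
  set c : ℝ := Real.exp (1 / γ) / Real.log 2 with hc
  set F : ℝ → ℝ := fun g => -(Real.exp (-g) * Real.logb 2 (1 + γ * g))
      - c * (∫ t in Set.Ioi (1 / γ + g), Real.exp (-t) / t) with hF
  have hl2 : (0:ℝ) < Real.log 2 := Real.log_pos one_lt_two
  have hderiv : ∀ x ∈ Set.Ici gl, HasDerivAt F (Real.logb 2 (1 + γ * x) * Real.exp (-x)) x := by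
    intro x hx
    have hx0 : 0 ≤ x := le_trans hgl hx
    have h1 : (0:ℝ) < 1 + γ * x := by nlinarith
    have hz : (0:ℝ) < 1 / γ + x := by positivity
    have hexp : HasDerivAt (fun g : ℝ => Real.exp (-g)) (-Real.exp (-x)) x := by
      simpa using (hasDerivAt_neg x).exp
    have hlin : HasDerivAt (fun g : ℝ => 1 + γ * g) γ x := by
      simpa using ((hasDerivAt_id x).const_mul γ).const_add 1
    have hlogb : HasDerivAt (fun g : ℝ => Real.logb 2 (1 + γ * g))
        (γ / (1 + γ * x) / Real.log 2) x := by
      have := (hlin.log h1.ne').div_const (Real.log 2)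
      simpa [Real.logb] using this
    have hshift : HasDerivAt (fun g : ℝ => 1 / γ + g) 1 x := by
      simpa using (hasDerivAt_id x).const_add (1 / γ)
    have hEI : HasDerivAt (fun g : ℝ => ∫ t in Set.Ioi (1 / γ + g), Real.exp (-t) / t)
        (-(Real.exp (-(1 / γ + x)) / (1 / γ + x))) x := by
      have := (expInt_hasDerivAt hz).comp x hshift
      rw [mul_one] at this; exact this
    have hcomb := ((hexp.mul hlogb).neg).sub (hEI.const_mul c)
    refine hcomb.congr_deriv ?_
    have hE : Real.exp (-(1 / γ + x)) = Real.exp (-x) / Real.exp (1 / γ) := by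
      rw [← Real.exp_sub]; ring_nf
    rw [hc, hE]
    have hγ' := hγ.ne'
    field_simp
    ring
  have g'pos : ∀ x ∈ Set.Ioi gl, 0 ≤ Real.logb 2 (1 + γ * x) * Real.exp (-x) := by
    intro x hx
    have hx0 : 0 ≤ x := le_trans hgl (le_of_lt hx)
    have h1 : (1:ℝ) ≤ 1 + γ * x := by nlinarith
    exact mul_nonneg (Real.logb_nonneg one_lt_two h1) (Real.exp_pos _).le
  have hg : Tendsto F atTop (𝓝 0) := by
    have h2 : Tendsto (fun g : ℝ => c * (∫ t in Set.Ioi (1 / γ + g), Real.exp (-t) / t))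
        atTop (𝓝 (c * 0)) := by
      refine Tendsto.const_mul c ?_
      exact expInt_tendsto_zero.comp (tendsto_atTop_add_const_left _ _ tendsto_id)
    have := (logb_exp_tendsto_zero hγ).sub h2
    simpa [hF, one_div] using this
  have := integral_Ioi_of_hasDerivAt_of_nonneg' hderiv g'pos hg
  rw [this, hF]
  ring

end Helpers

/-- The exponential integral function `E₁(z) = ∫_z^∞ e^{−t}/t dt`. -/
noncomputable def expInt (z : ℝ) : ℝ := ∫ t in Set.Ioi z, Real.exp (-t) / t

/-- Closed-form ergodic throughput of the PHAT-PI scheme (Theorem 2). -/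
theorem phat_pi_ergodic_throughput (γ : ℝ) (hγ : 0 < γ) (gl : ℝ) (hgl : 0 ≤ gl) :
    ∫ g in Set.Ioi gl, Real.logb 2 (1 + γ * g) * Real.exp (-g)
      = Real.exp (-gl) * Real.logb 2 (1 + γ * gl)
        + Real.exp (1 / γ) / Real.log 2 * expInt (1 / γ + gl) := by
  simpa [expInt] using phat_pi_aux γ hγ gl hgl
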